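/- For all a ∈ A one has I(a*) = conj(I(a)); consequently the sesquilinear form h(a,b) := I(a·b*) (linear in a, conjugate-linear in b) is Hermitian, i.e. h(b,a) = conj(h(a,b)). Moreover, the restriction of h to the p²-dimensional subspace M := span_ℂ{η₊^n η₋^m : 0 ≤ n,m ≤ p−1} is nondegenerate, and M admits an h-orthogonal basis consisting of (p²+1)/2 vectors of positive real h-norm and (p²−1)/2 vectors of negative real h-norm; that is, (M, h) is a pseudo-Euclidean space of signature ((p²+1)/2, (p²−1)/2). -/

import Mathlib

open scoped TensorProduct

noncomputable section

/-- `q = exp(2πi/p)`, a primitive `p`-th root of unity. -/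
def q (p : ℕ) : ℂ := Complex.exp (2 * Real.pi * Complex.I / p)

/-- `q^{1/2} = exp(iπ/p)`. -/
def qh (p : ℕ) : ℂ := Complex.exp (Real.pi * Complex.I / p)

/-- The balanced q-number `[k] = (q^k - q^{-k})/(q - q^{-1})`. -/
def qnum (p k : ℕ) : ℂ := (q p ^ k - (q p)⁻¹ ^ k) / (q p - (q p)⁻¹)

/-- The balanced q-factorial `[k]! = [1][2]⋯[k]`, with `[0]! = 1`. -/
def qfact (p k : ℕ) : ℂ := ∏ j ∈ Finset.range k, qnum p (j + 1)

/-- Generators `η₊, η₋, δ` of the coordinate algebra of `E(1,1|p)`. -/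
inductive Gen : Type
  | ep : Gen
  | em : Gen
  | d : Gen

open FreeAlgebra in
/-- The defining relations of `A(E(1,1|p))`: the two-sided ideal generated by
`η₋η₊ − q²η₊η₋`, `η₊δ − q²δη₊`, `η₋δ − q²δη₋`, `δ^p − 1`, `η₊^p`, `η₋^p`. -/
inductive ERel (p : ℕ) : FreeAlgebra ℂ Gen → FreeAlgebra ℂ Gen → Prop
  | commEta : ERel p (ι ℂ Gen.em * ι ℂ Gen.ep) ((q p ^ 2) • (ι ℂ Gen.ep * ι ℂ Gen.em))
  | commEpD : ERel p (ι ℂ Gen.ep * ι ℂ Gen.d) ((q p ^ 2) • (ι ℂ Gen.d * ι ℂ Gen.ep))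
  | commEmD : ERel p (ι ℂ Gen.em * ι ℂ Gen.d) ((q p ^ 2) • (ι ℂ Gen.d * ι ℂ Gen.em))
  | deltaPow : ERel p (ι ℂ Gen.d ^ p) 1
  | epPow : ERel p (ι ℂ Gen.ep ^ p) 0
  | emPow : ERel p (ι ℂ Gen.em ^ p) 0

/-- The coordinate algebra `A = A(E(1,1|p))` of the reduced quantum Poincaré group. -/
abbrev A (p : ℕ) : Type := RingQuot (ERel p)

/-- `η₊ ∈ A`. -/
def ηp (p : ℕ) : A p := RingQuot.mkAlgHom ℂ (ERel p) (FreeAlgebra.ι ℂ Gen.ep)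

/-- `η₋ ∈ A`. -/
def ηm (p : ℕ) : A p := RingQuot.mkAlgHom ℂ (ERel p) (FreeAlgebra.ι ℂ Gen.em)

/-- `δ ∈ A`. -/
def dl (p : ℕ) : A p := RingQuot.mkAlgHom ℂ (ERel p) (FreeAlgebra.ι ℂ Gen.d)

lemma q_ne_zero (p : ℕ) : q p ≠ 0 := Complex.exp_ne_zero _

lemma q_pow_p (p : ℕ) (hp : 0 < p) : q p ^ p = 1 := by
  have hp' : (p:ℂ) ≠ 0 := Nat.cast_ne_zero.2 hp.ne'
  rw [q, ← Complex.exp_nat_mul]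
  have : (p:ℂ) * (2 * Real.pi * Complex.I / p) = 2 * Real.pi * Complex.I := by
    field_simp
  rw [this, Complex.exp_two_pi_mul_I]

lemma q_conj (p : ℕ) : (starRingEnd ℂ) (q p) = (q p)⁻¹ := by
  rw [q, ← Complex.exp_conj, ← Complex.exp_neg]
  congr 1
  simp only [map_div₀, map_mul, Complex.conj_I, Complex.conj_ofReal, map_ofNat,
    Complex.conj_natCast, neg_div]
  ring



lemma rel_me (p : ℕ) : ηm p * ηp p = (q p ^ 2) • (ηp p * ηm p) := by
  have := RingQuot.mkAlgHom_rel ℂ (ERel.commEta (p := p))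
  simpa [ηp, ηm, map_mul, map_smul] using this

lemma rel_pd (p : ℕ) : ηp p * dl p = (q p ^ 2) • (dl p * ηp p) := by
  have := RingQuot.mkAlgHom_rel ℂ (ERel.commEpD (p := p))
  simpa [ηp, dl, map_mul, map_smul] using this

lemma rel_md (p : ℕ) : ηm p * dl p = (q p ^ 2) • (dl p * ηm p) := by
  have := RingQuot.mkAlgHom_rel ℂ (ERel.commEmD (p := p))
  simpa [ηm, dl, map_mul, map_smul] using this

lemma rel_dp (p : ℕ) : dl p ^ p = 1 := by
  have := RingQuot.mkAlgHom_rel ℂ (ERel.deltaPow (p := p))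
  simpa [dl, map_pow, map_one] using this

lemma rel_pp (p : ℕ) : ηp p ^ p = 0 := by
  have := RingQuot.mkAlgHom_rel ℂ (ERel.epPow (p := p))
  simpa [ηp, map_pow, map_zero] using this

lemma rel_mp (p : ℕ) : ηm p ^ p = 0 := by
  have := RingQuot.mkAlgHom_rel ℂ (ERel.emPow (p := p))
  simpa [ηm, map_pow, map_zero] using this

lemma swap_pow {R : Type*} [Ring R] [Algebra ℂ R] {x y : R} {c : ℂ}
    (h : x * y = c • (y * x)) : ∀ m n : ℕ, x ^ m * y ^ n = c ^ (m * n) • (y ^ n * x ^ m) := by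
  have h1 : ∀ m, x ^ m * y = c ^ m • (y * x ^ m) := by
    intro m
    induction m with
    | zero => simp
    | succ k ih =>
      calc x ^ (k+1) * y = x ^ k * (x * y) := by rw [pow_succ, mul_assoc]
      _ = x ^ k * (c • (y * x)) := by rw [h]
      _ = c • (x ^ k * y * x) := by rw [mul_smul_comm, mul_assoc]
      _ = c • ((c ^ k • (y * x ^ k)) * x) := by rw [ih]
      _ = (c * c ^ k) • (y * x ^ k * x) := by rw [smul_mul_assoc, smul_smul]
      _ = c ^ (k+1) • (y * x ^ (k+1)) := by
          rw [mul_assoc, ← pow_succ]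
          congr 1
          ring
  intro m n
  induction n with
  | zero => simp
  | succ k ih =>
    calc x ^ m * y ^ (k+1) = (x ^ m * y ^ k) * y := by rw [pow_succ, mul_assoc]
    _ = c ^ (m*k) • (y ^ k * (x ^ m * y)) := by rw [ih, smul_mul_assoc, mul_assoc]
    _ = c ^ (m*k) • (y ^ k * (c ^ m • (y * x ^ m))) := by rw [h1]
    _ = (c ^ (m*k) * c ^ m) • (y ^ (k+1) * x ^ m) := by
        rw [mul_smul_comm, smul_smul, pow_succ, mul_assoc]
    _ = c ^ (m * (k+1)) • (y ^ (k+1) * x ^ m) := by rw [← pow_add, Nat.mul_succ]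

lemma Lme (p m n : ℕ) : ηm p ^ m * ηp p ^ n = (q p) ^ (2*(m*n)) • (ηp p ^ n * ηm p ^ m) := by
  have := swap_pow (rel_me p) m n
  rwa [← pow_mul] at this

lemma Lpd (p n k : ℕ) : ηp p ^ n * dl p ^ k = (q p) ^ (2*(n*k)) • (dl p ^ k * ηp p ^ n) := by
  have := swap_pow (rel_pd p) n k
  rwa [← pow_mul] at this

lemma Lmd (p m k : ℕ) : ηm p ^ m * dl p ^ k = (q p) ^ (2*(m*k)) • (dl p ^ k * ηm p ^ m) := by
  have := swap_pow (rel_md p) m k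
  rwa [← pow_mul] at this

lemma Mform (p n m k : ℕ) :
    ηp p ^ n * ηm p ^ m * dl p ^ k
      = ((q p) ^ (2*(m*k)) * (q p) ^ (2*(n*k))) • (dl p ^ k * ηp p ^ n * ηm p ^ m) := by
  calc ηp p ^ n * ηm p ^ m * dl p ^ k = ηp p ^ n * (ηm p ^ m * dl p ^ k) := by rw [mul_assoc]
  _ = ηp p ^ n * ((q p)^(2*(m*k)) • (dl p ^ k * ηm p ^ m)) := by rw [Lmd]
  _ = (q p)^(2*(m*k)) • (ηp p ^ n * dl p ^ k * ηm p ^ m) := by rw [mul_smul_comm, mul_assoc]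
  _ = (q p)^(2*(m*k)) • (((q p)^(2*(n*k)) • (dl p ^ k * ηp p ^ n)) * ηm p ^ m) := by rw [Lpd]
  _ = _ := by rw [smul_mul_assoc, smul_smul]

lemma I_mono (p : ℕ) (hp0 : 0 < p) (I : A p →ₗ[ℂ] ℂ)
    (hI : ∀ n m k : ℕ, n < p → m < p → k < p →
      I (ηp p ^ n * ηm p ^ m * dl p ^ k) =
        if n = p - 1 ∧ m = p - 1 ∧ k = 0 then (q p)⁻¹ else 0) :
    ∀ n m k : ℕ, I (ηp p ^ n * ηm p ^ m * dl p ^ k) =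
      if n = p - 1 ∧ m = p - 1 ∧ k % p = 0 then (q p)⁻¹ else 0 := by
  intro n m k
  rcases lt_or_ge n p with hn | hn
  · rcases lt_or_ge m p with hm | hm
    · have hd : dl p ^ k = dl p ^ (k % p) := by
        conv_lhs => rw [← Nat.div_add_mod k p]
        rw [pow_add, pow_mul, rel_dp, one_pow, one_mul]
      rw [hd, hI n m (k % p) hn hm (Nat.mod_lt _ hp0)]
    · have h0 : ηm p ^ m = 0 := by
        obtain ⟨j, rfl⟩ := Nat.exists_eq_add_of_le hm
        rw [pow_add, rel_mp, zero_mul]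
      have : ¬ (m = p - 1) := by omega
      rw [h0, mul_zero, zero_mul, map_zero, if_neg (by tauto)]
  · have h0 : ηp p ^ n = 0 := by
      obtain ⟨j, rfl⟩ := Nat.exists_eq_add_of_le hn
      rw [pow_add, rel_pp, zero_mul]
    have : ¬ (n = p - 1) := by omega
    rw [h0, zero_mul, zero_mul, map_zero, if_neg (by tauto)]

lemma qpow_ne (p a : ℕ) : (q p) ^ a ≠ 0 := pow_ne_zero _ (q_ne_zero p)

lemma Mform' (p n m k : ℕ) :
    dl p ^ k * ηp p ^ n * ηm p ^ m
      = ((q p) ^ (2*(m*k)) * (q p) ^ (2*(n*k)))⁻¹ • (ηp p ^ n * ηm p ^ m * dl p ^ k) := by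
  rw [eq_inv_smul_iff₀ (mul_ne_zero (qpow_ne p _) (qpow_ne p _))]
  exact (Mform p n m k).symm

lemma Lme1 (p m : ℕ) : ηm p ^ m * ηp p = (q p)^(2*m) • (ηp p * ηm p ^ m) := by
  have := Lme p m 1
  simpa using this

lemma Lpd1 (p k : ℕ) : ηp p * dl p ^ k = (q p)^(2*k) • (dl p ^ k * ηp p) := by
  have := Lpd p 1 k
  simpa using this

lemma Lmd1 (p k : ℕ) : ηm p * dl p ^ k = (q p)^(2*k) • (dl p ^ k * ηm p) := by
  have := Lmd p 1 k
  simpa using this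

lemma rmul_d (p n m k : ℕ) :
    (ηp p ^ n * ηm p ^ m * dl p ^ k) * dl p = ηp p ^ n * ηm p ^ m * dl p ^ (k+1) := by
  rw [pow_succ, ← mul_assoc]

lemma rmul_p (p n m k : ℕ) : ∃ s : ℂ,
    (ηp p ^ n * ηm p ^ m * dl p ^ k) * ηp p = s • (ηp p ^ (n+1) * ηm p ^ m * dl p ^ k) := by
  have hcalc : (ηp p ^ n * ηm p ^ m * dl p ^ k) * ηp p
      = ((((q p) ^ (2*(m*k)) * (q p) ^ (2*(n*k))) * (q p)^(2*m)) *
          ((q p) ^ (2*(m*k)) * (q p) ^ (2*((n+1)*k)))⁻¹) • (ηp p ^ (n+1) * ηm p ^ m * dl p ^ k) := by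
    calc (ηp p ^ n * ηm p ^ m * dl p ^ k) * ηp p
        = ((((q p) ^ (2*(m*k)) * (q p) ^ (2*(n*k)))) • (dl p ^ k * ηp p ^ n * ηm p ^ m)) * ηp p := by
          rw [Mform p n m k]
      _ = (((q p) ^ (2*(m*k)) * (q p) ^ (2*(n*k)))) • ((dl p ^ k * ηp p ^ n) * (ηm p ^ m * ηp p)) := by
          rw [smul_mul_assoc, mul_assoc]
      _ = (((q p) ^ (2*(m*k)) * (q p) ^ (2*(n*k))) * (q p)^(2*m)) •
            ((dl p ^ k * (ηp p ^ n * ηp p)) * ηm p ^ m) := by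
          rw [Lme1, mul_smul_comm, smul_smul]
          simp only [mul_assoc]
      _ = (((q p) ^ (2*(m*k)) * (q p) ^ (2*(n*k))) * (q p)^(2*m)) •
            (dl p ^ k * ηp p ^ (n+1) * ηm p ^ m) := by rw [← pow_succ]
      _ = ((((q p) ^ (2*(m*k)) * (q p) ^ (2*(n*k))) * (q p)^(2*m)) *
            ((q p) ^ (2*(m*k)) * (q p) ^ (2*((n+1)*k)))⁻¹) • (ηp p ^ (n+1) * ηm p ^ m * dl p ^ k) := by
          rw [Mform' p (n+1) m k, smul_smul]
  exact ⟨_, hcalc⟩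

lemma rmul_m (p n m k : ℕ) : ∃ s : ℂ,
    (ηp p ^ n * ηm p ^ m * dl p ^ k) * ηm p = s • (ηp p ^ n * ηm p ^ (m+1) * dl p ^ k) := by
  have hcalc : (ηp p ^ n * ηm p ^ m * dl p ^ k) * ηm p
      = ((((q p) ^ (2*(m*k)) * (q p) ^ (2*(n*k)))) *
          ((q p) ^ (2*((m+1)*k)) * (q p) ^ (2*(n*k)))⁻¹) • (ηp p ^ n * ηm p ^ (m+1) * dl p ^ k) := by
    calc (ηp p ^ n * ηm p ^ m * dl p ^ k) * ηm p
        = ((((q p) ^ (2*(m*k)) * (q p) ^ (2*(n*k)))) • (dl p ^ k * ηp p ^ n * ηm p ^ m)) * ηm p := by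
          rw [Mform p n m k]
      _ = (((q p) ^ (2*(m*k)) * (q p) ^ (2*(n*k)))) • (dl p ^ k * ηp p ^ n * ηm p ^ (m+1)) := by
          rw [smul_mul_assoc, mul_assoc, ← pow_succ]
      _ = ((((q p) ^ (2*(m*k)) * (q p) ^ (2*(n*k)))) *
            ((q p) ^ (2*((m+1)*k)) * (q p) ^ (2*(n*k)))⁻¹) • (ηp p ^ n * ηm p ^ (m+1) * dl p ^ k) := by
          rw [Mform' p n (m+1) k, smul_smul]
  exact ⟨_, hcalc⟩

lemma span_mono_top (p : ℕ) :
    Submodule.span ℂ {x : A p | ∃ n m k : ℕ, x = ηp p ^ n * ηm p ^ m * dl p ^ k} = ⊤ := by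
  set S := Submodule.span ℂ {x : A p | ∃ n m k : ℕ, x = ηp p ^ n * ηm p ^ m * dl p ^ k} with hS
  have hmem : ∀ n m k : ℕ, (ηp p ^ n * ηm p ^ m * dl p ^ k) ∈ S :=
    fun n m k => Submodule.subset_span ⟨n, m, k, rfl⟩
  have h1 : (1 : A p) ∈ S := by simpa using hmem 0 0 0
  have hrd : ∀ b ∈ S, b * dl p ∈ S := by
    intro b hb
    refine Submodule.span_induction (p := fun x _ => x * dl p ∈ S) ?_ ?_ ?_ ?_ hb
    · rintro x ⟨n, m, k, rfl⟩; rw [rmul_d]; exact hmem n m (k+1)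
    · show (0 : A p) * dl p ∈ S
      rw [zero_mul]; exact S.zero_mem
    · intro x y _ _ hx hy; rw [add_mul]; exact S.add_mem hx hy
    · intro a x _ hx; rw [smul_mul_assoc]; exact S.smul_mem a hx
  have hrp : ∀ b ∈ S, b * ηp p ∈ S := by
    intro b hb
    refine Submodule.span_induction (p := fun x _ => x * ηp p ∈ S) ?_ ?_ ?_ ?_ hb
    · rintro x ⟨n, m, k, rfl⟩
      obtain ⟨s, hs⟩ := rmul_p p n m k
      rw [hs]; exact S.smul_mem s (hmem (n+1) m k)
    · show (0 : A p) * ηp p ∈ S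
      rw [zero_mul]; exact S.zero_mem
    · intro x y _ _ hx hy; rw [add_mul]; exact S.add_mem hx hy
    · intro a x _ hx; rw [smul_mul_assoc]; exact S.smul_mem a hx
  have hrm : ∀ b ∈ S, b * ηm p ∈ S := by
    intro b hb
    refine Submodule.span_induction (p := fun x _ => x * ηm p ∈ S) ?_ ?_ ?_ ?_ hb
    · rintro x ⟨n, m, k, rfl⟩
      obtain ⟨s, hs⟩ := rmul_m p n m k
      rw [hs]; exact S.smul_mem s (hmem n (m+1) k)
    · show (0 : A p) * ηm p ∈ S
      rw [zero_mul]; exact S.zero_mem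
    · intro x y _ _ hx hy; rw [add_mul]; exact S.add_mem hx hy
    · intro a x _ hx; rw [smul_mul_assoc]; exact S.smul_mem a hx
  have main : ∀ x : FreeAlgebra ℂ Gen, ∀ b ∈ S, b * (RingQuot.mkAlgHom ℂ (ERel p)) x ∈ S := by
    intro x
    refine FreeAlgebra.induction ℂ Gen
      (motive := fun x => ∀ b ∈ S, b * (RingQuot.mkAlgHom ℂ (ERel p)) x ∈ S) ?_ ?_ ?_ ?_ x
    · intro r b hb
      rw [AlgHom.commutes, ← Algebra.commutes, ← Algebra.smul_def]
      exact S.smul_mem r hb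
    · intro g b hb
      cases g
      · exact hrp b hb
      · exact hrm b hb
      · exact hrd b hb
    · intro x y hx hy b hb
      rw [map_mul, ← mul_assoc]
      exact hy _ (hx b hb)
    · intro x y hx hy b hb
      rw [map_add, mul_add]
      exact S.add_mem (hx b hb) (hy b hb)
  rw [eq_top_iff]
  intro a _
  obtain ⟨x, rfl⟩ := RingQuot.mkAlgHom_surjective ℂ (ERel p) a
  simpa using main x 1 h1

lemma nat_sq_lemma1 (p : ℕ) (hp3 : 3 ≤ p) : 2*((p-1)*(p-1)) = 2 + p*(2*p-4) := by
  obtain ⟨u, rfl⟩ : ∃ u, p = u+3 := ⟨p-3, by omega⟩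
  have h1 : u+3-1 = u+2 := by omega
  have h2 : 2*(u+3)-4 = 2*u+2 := by omega
  rw [h1, h2]; ring

lemma idx_decomp (p i : ℕ) (hp0 : 0 < p) (hi : i < p*p) :
    (p*p - 1 - i) / p = p - 1 - i/p ∧ (p*p - 1 - i) % p = p - 1 - i % p := by
  have di := Nat.div_add_mod i p
  have hb : i % p < p := Nat.mod_lt _ hp0
  have ha : i / p < p := by
    rw [Nat.div_lt_iff_lt_mul hp0]; exact hi
  have h1 : p*(p-1-(i/p)) + p*(i/p) = p*(p-1) := by
    rw [← Nat.mul_add]; congr 1; omega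
  have h2 : p*(p-1) + p = p*p := by
    rw [← Nat.mul_succ]; congr 1; omega
  have hj : p*p - 1 - i = p*(p-1-(i/p)) + (p-1-(i % p)) := by omega
  constructor
  · rw [hj, Nat.mul_add_div hp0,
      Nat.div_eq_of_lt (show p - 1 - i % p < p by omega), Nat.add_zero]
  · rw [hj, Nat.mul_add_mod, Nat.mod_eq_of_lt (show p - 1 - i % p < p by omega)]

lemma mid_lemma (p t : ℕ) (ht : p = 2*t+1) (hp3 : 3 ≤ p) :
    ((p*p-1)/2) / p = t ∧ ((p*p-1)/2) % p = t ∧ p*p-1-((p*p-1)/2) = (p*p-1)/2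
      ∧ 2*((p*p-1)/2)+1 = p*p := by
  have h : p*p = 2*(p*t+t)+1 := by rw [ht]; ring
  have h2 : (p*p-1)/2 = p*t+t := by omega
  have ht' : t < p := by omega
  refine ⟨?_, ?_, by omega, by omega⟩
  · rw [h2, Nat.mul_add_div (by omega : 0 < p), Nat.div_eq_of_lt ht', Nat.add_zero]
  · rw [h2, Nat.mul_add_mod, Nat.mod_eq_of_lt ht']

lemma mid_exp (p t : ℕ) (ht : p = 2*t+1) (hp3 : 3 ≤ p) : 2*(t*(t+t)) = p*(p-2)+1 := by
  obtain ⟨u, rfl⟩ : ∃ u, t = u+1 := ⟨t-1, by omega⟩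
  subst ht
  have h : 2*(u+1)+1-2 = 2*u+1 := by omega
  rw [h]; ring



lemma ortho_construct {V : Type*} [AddCommGroup V] [Module ℂ V]
    (N : ℕ) (hN9 : 9 ≤ N) (hodd : 2*((N-1)/2)+1 = N)
    (MM : ℕ → V) (B : V → V → ℂ)
    (hB1 : ∀ x y z : V, B (x+y) z = B x z + B y z)
    (hB2 : ∀ (a : ℂ) (x z : V), B (a • x) z = a * B x z)
    (hB3 : ∀ x y z : V, B x (y+z) = B x y + B x z)
    (hB4 : ∀ (a : ℂ) (x z : V), B x (a • z) = (starRingEnd ℂ) a * B x z)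
    (hsym : ∀ x y : V, B y x = (starRingEnd ℂ) (B x y))
    (hG0 : ∀ i j : ℕ, i < N → j < N → i + j ≠ N-1 → B (MM i) (MM j) = 0)
    (hGU : ∀ i : ℕ, i < N → B (MM i) (MM (N-1-i)) * (starRingEnd ℂ) (B (MM i) (MM (N-1-i))) = 1)
    (hGmid : B (MM ((N-1)/2)) (MM ((N-1)/2)) = 1) :
    (∀ a ∈ Submodule.span ℂ (Set.range (fun i : Fin N => MM i.val)),
      (∀ b ∈ Submodule.span ℂ (Set.range (fun i : Fin N => MM i.val)), B a b = 0) → a = 0) ∧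
    ∃ (e : Fin N → V) (sg : Fin N → ℝ),
      LinearIndependent ℂ e ∧
      Submodule.span ℂ (Set.range e) = Submodule.span ℂ (Set.range (fun i : Fin N => MM i.val)) ∧
      (∀ i j : Fin N, i ≠ j → B (e i) (e j) = 0) ∧
      (∀ i : Fin N, B (e i) (e i) = ((sg i : ℝ) : ℂ)) ∧
      (Finset.univ.filter fun i : Fin N => 0 < sg i).card = (N+1)/2 ∧
      (Finset.univ.filter fun i : Fin N => sg i < 0).card = (N-1)/2 := by
  classical
  have hB0l : ∀ z : V, B 0 z = 0 := by
    intro z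
    have := hB2 0 0 z
    simpa using this
  have hBsum : ∀ (s : Finset (Fin N)) (f : Fin N → V) (z : V),
      B (∑ i ∈ s, f i) z = ∑ i ∈ s, B (f i) z := by
    intro s f z
    induction s using Finset.induction_on with
    | empty => simpa using hB0l z
    | @insert _ _ hnotmem ih =>
      rw [Finset.sum_insert hnotmem, Finset.sum_insert hnotmem, hB1, ih]
  set al : ℕ → ℂ := fun i => B (MM i) (MM (N-1-i)) with hal
  have halu : ∀ i : ℕ, i < N → al i * (starRingEnd ℂ) (al i) = 1 := fun i hi => hGU i hi
  have haln : ∀ i : ℕ, i < N → al i ≠ 0 := by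
    intro i hi h0
    have := halu i hi
    rw [h0] at this
    simp at this
  set ui : ℕ → ℕ := fun a => if 2*a+1 ≤ N then a else N-1-a with hui
  set be : ℕ → ℂ := fun a => if 2*a+1 < N then al a else if 2*a+1 = N then 0 else -al (N-1-a)
    with hbe
  set e0 : Fin N → V := fun i => MM (ui i.val) + be i.val • MM (N-1-ui i.val) with he0
  set sg0 : Fin N → ℝ := fun i =>
    if 2*i.val+1 < N then 2 else if 2*i.val+1 = N then 1 else -2 with hsg0
  have hexp : ∀ (x y x' y' : V) (a b : ℂ),
      B (x + a • y) (x' + b • y') = B x x' + (starRingEnd ℂ) b * B x y'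
        + a * B y x' + a * ((starRingEnd ℂ) b * B y y') := by
    intro x y x' y' a b
    rw [hB1, hB3, hB3, hB2, hB4, hB4, hB2]
    ring
  -- basic facts about ui
  have hui_lt : ∀ a : ℕ, a < N → ui a < N := by
    intro a ha
    simp only [hui]
    split_ifs <;> omega
  -- orthogonality
  have horth : ∀ i j : Fin N, i ≠ j → B (e0 i) (e0 j) = 0 := by
    intro i j hne
    have hab : i.val ≠ j.val := fun h => hne (Fin.ext h)
    have ha := i.isLt
    have hb := j.isLt
    simp only [he0]
    rw [hexp]
    by_cases hpart : i.val + j.val = N-1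
    · rcases lt_trichotomy (2*i.val+1) N with h1 | h1 | h1
      · have h2 : N < 2*j.val+1 := by omega
        have e1 : ui i.val = i.val := by simp only [hui]; rw [if_pos (by omega)]
        have e2 : be i.val = al i.val := by simp only [hbe]; rw [if_pos h1]
        have e3 : ui j.val = i.val := by
          simp only [hui]; rw [if_neg (by omega)]; omega
        have e4 : be j.val = -al i.val := by
          simp only [hbe]; rw [if_neg (by omega), if_neg (by omega),
            show N-1-j.val = i.val from by omega]
        rw [e1, e2, e3, e4]
        rw [hG0 i.val i.val ha ha (by omega),
          hG0 (N-1-i.val) (N-1-i.val) (by omega) (by omega) (by omega)]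
        rw [hsym (MM i.val) (MM (N-1-i.val))]
        have hfold : B (MM i.val) (MM (N-1-i.val)) = al i.val := rfl
        rw [hfold]
        simp only [map_neg]
        ring
      · exact absurd (Fin.ext (show i.val = j.val by omega)) hne
      · have h2 : 2*j.val+1 < N := by omega
        have e1 : ui i.val = j.val := by
          simp only [hui]; rw [if_neg (by omega)]; omega
        have e2 : be i.val = -al j.val := by
          simp only [hbe]; rw [if_neg (by omega), if_neg (by omega),
            show N-1-i.val = j.val from by omega]
        have e3 : ui j.val = j.val := by simp only [hui]; rw [if_pos (by omega)]
        have e4 : be j.val = al j.val := by simp only [hbe]; rw [if_pos h2]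
        rw [e1, e2, e3, e4]
        rw [hG0 j.val j.val hb hb (by omega),
          hG0 (N-1-j.val) (N-1-j.val) (by omega) (by omega) (by omega)]
        rw [hsym (MM j.val) (MM (N-1-j.val))]
        have hfold : B (MM j.val) (MM (N-1-j.val)) = al j.val := rfl
        rw [hfold]
        ring
    · have z1 : B (MM (ui i.val)) (MM (ui j.val)) = 0 := by
        apply hG0 _ _ (hui_lt _ ha) (hui_lt _ hb)
        simp only [hui]; split_ifs <;> omega
      have z2 : B (MM (ui i.val)) (MM (N-1-ui j.val)) = 0 := by
        apply hG0 _ _ (hui_lt _ ha) (by omega)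
        simp only [hui]; split_ifs <;> omega
      have z3 : B (MM (N-1-ui i.val)) (MM (ui j.val)) = 0 := by
        apply hG0 _ _ (by omega) (hui_lt _ hb)
        simp only [hui]; split_ifs <;> omega
      have z4 : B (MM (N-1-ui i.val)) (MM (N-1-ui j.val)) = 0 := by
        apply hG0 _ _ (by omega) (by omega)
        simp only [hui]; split_ifs <;> omega
      rw [z1, z2, z3, z4]
      ring
  -- norms
  have hnorm : ∀ i : Fin N, B (e0 i) (e0 i) = ((sg0 i : ℝ) : ℂ) := by
    intro i
    have ha := i.isLt
    simp only [he0, hsg0]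
    rw [hexp]
    rcases lt_trichotomy (2*i.val+1) N with h1 | h1 | h1
    · rw [if_pos h1]
      have e1 : ui i.val = i.val := by simp only [hui]; rw [if_pos (by omega)]
      have e2 : be i.val = al i.val := by simp only [hbe]; rw [if_pos h1]
      rw [e1, e2]
      rw [hG0 i.val i.val ha ha (by omega),
        hG0 (N-1-i.val) (N-1-i.val) (by omega) (by omega) (by omega)]
      rw [hsym (MM i.val) (MM (N-1-i.val))]
      have hfold : B (MM i.val) (MM (N-1-i.val)) = al i.val := rfl
      rw [hfold]
      push_cast
      linear_combination 2 * halu i.val ha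
    · rw [if_neg (by omega), if_pos h1]
      have e1 : ui i.val = i.val := by simp only [hui]; rw [if_pos (by omega)]
      have e2 : be i.val = 0 := by
        simp only [hbe]; rw [if_neg (by omega), if_pos h1]
      rw [e1, e2]
      simp only [map_zero, zero_mul, mul_zero, add_zero]
      rw [show i.val = (N-1)/2 from by omega, hGmid]
      norm_num
    · rw [if_neg (by omega), if_neg (by omega)]
      obtain ⟨k, hk, hik⟩ : ∃ k, 2*k+1 < N ∧ i.val = N-1-k := ⟨N-1-i.val, by omega, by omega⟩
      rw [hik]
      have e1 : ui (N-1-k) = k := by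
        simp only [hui]; rw [if_neg (by omega)]; omega
      have e2 : be (N-1-k) = -al k := by
        simp only [hbe]; rw [if_neg (by omega), if_neg (by omega),
          show N-1-(N-1-k) = k from by omega]
      rw [e1, e2]
      rw [hG0 k k (by omega) (by omega) (by omega),
        hG0 (N-1-k) (N-1-k) (by omega) (by omega) (by omega)]
      rw [hsym (MM k) (MM (N-1-k))]
      have hfold : B (MM k) (MM (N-1-k)) = al k := rfl
      rw [hfold]
      push_cast
      simp only [map_neg]
      linear_combination -2 * halu k (by omega)
  -- nonvanishing of the diagonal values
  have hsgne : ∀ i : Fin N, ((sg0 i : ℝ) : ℂ) ≠ 0 := by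
    intro i
    simp only [hsg0]
    split_ifs <;> norm_num
  -- linear independence
  have hli : LinearIndependent ℂ e0 := by
    rw [linearIndependent_iff']
    intro s g hsum i hi
    have h0 : B (∑ j ∈ s, g j • e0 j) (e0 i) = 0 := by rw [hsum, hB0l]
    rw [hBsum] at h0
    simp only [hB2] at h0
    rw [Finset.sum_eq_single i] at h0
    · rw [hnorm i] at h0
      exact (mul_eq_zero.mp h0).resolve_right (hsgne i)
    · intro b _ hbne
      rw [horth b i hbne, mul_zero]
    · intro habs
      exact absurd hi habs
  -- span equality
  have hspan : Submodule.span ℂ (Set.range e0)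
      = Submodule.span ℂ (Set.range (fun i : Fin N => MM i.val)) := by
    apply le_antisymm
    · rw [Submodule.span_le]
      rintro x ⟨i, rfl⟩
      simp only [he0]
      apply Submodule.add_mem
      · exact Submodule.subset_span ⟨⟨ui i.val, hui_lt _ i.isLt⟩, rfl⟩
      · exact Submodule.smul_mem _ _
          (Submodule.subset_span ⟨⟨N-1-ui i.val, by omega⟩, rfl⟩)
    · rw [Submodule.span_le]
      rintro x ⟨i, rfl⟩
      show MM i.val ∈ Submodule.span ℂ (Set.range e0)
      have ha := i.isLt
      rcases lt_trichotomy (2*i.val+1) N with h1 | h1 | h1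
      · have e1 : ui i.val = i.val := by simp only [hui]; rw [if_pos (by omega)]
        have e2 : be i.val = al i.val := by simp only [hbe]; rw [if_pos h1]
        set j : Fin N := ⟨N-1-i.val, by omega⟩ with hj
        have e3 : ui j.val = i.val := by
          simp only [hui, hj]; rw [if_neg (by omega)]; omega
        have e4 : be j.val = -al i.val := by
          simp only [hbe, hj]
          rw [if_neg (by omega), if_neg (by omega),
            show N-1-(N-1-i.val) = i.val from by omega]
        have hsum2 : e0 i + e0 j = (2:ℂ) • MM i.val := by
          simp only [he0]
          rw [e1, e2, e3, e4]
          module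
        have : MM i.val = (2:ℂ)⁻¹ • (e0 i + e0 j) := by
          rw [hsum2, smul_smul]
          norm_num
        rw [this]
        exact Submodule.smul_mem _ _ (Submodule.add_mem _
          (Submodule.subset_span ⟨i, rfl⟩) (Submodule.subset_span ⟨j, rfl⟩))
      · have e1 : ui i.val = i.val := by simp only [hui]; rw [if_pos (by omega)]
        have e2 : be i.val = 0 := by
          simp only [hbe]; rw [if_neg (by omega), if_pos h1]
        have : MM i.val = e0 i := by
          simp only [he0]; rw [e1, e2, zero_smul, add_zero]
        rw [this]
        exact Submodule.subset_span ⟨i, rfl⟩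
      · obtain ⟨k, hk, hik⟩ : ∃ k, 2*k+1 < N ∧ i.val = N-1-k := ⟨N-1-i.val, by omega, by omega⟩
        set j : Fin N := ⟨k, by omega⟩ with hj
        have e1 : ui i.val = k := by
          simp only [hui, hik]; rw [if_neg (by omega)]; omega
        have e2 : be i.val = -al k := by
          simp only [hbe, hik]
          rw [if_neg (by omega), if_neg (by omega),
            show N-1-(N-1-k) = k from by omega]
        have e3 : ui j.val = k := by simp only [hui, hj]; rw [if_pos (by omega)]
        have e4 : be j.val = al k := by simp only [hbe, hj]; rw [if_pos hk]
        have hsub : e0 j - e0 i = (2 * al k) • MM i.val := by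
          simp only [he0]
          rw [e1, e2, e3, e4, hik]
          module
        have h2al : (2 * al k) ≠ 0 := by
          have := haln k (by omega)
          intro h
          rcases mul_eq_zero.mp h with h' | h'
          · norm_num at h'
          · exact this h'
        have : MM i.val = (2 * al k)⁻¹ • (e0 j - e0 i) := by
          rw [hsub, smul_smul, inv_mul_cancel₀ h2al, one_smul]
        rw [this]
        exact Submodule.smul_mem _ _ (Submodule.sub_mem _
          (Submodule.subset_span ⟨j, rfl⟩) (Submodule.subset_span ⟨i, rfl⟩))
  -- counts
  have hcount1 : (Finset.univ.filter fun i : Fin N => 0 < sg0 i).card = (N+1)/2 := by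
    have heq : (Finset.univ.filter fun i : Fin N => 0 < sg0 i)
        = (Finset.univ.filter fun i : Fin N => 2*i.val+1 ≤ N) := by
      apply Finset.filter_congr
      intro i _
      simp only [hsg0]
      split_ifs with h1 h2
      · simp only [iff_true_intro (le_of_lt h1)]; norm_num
      · simp only [iff_true_intro (le_of_eq h2)]; norm_num
      · constructor
        · intro h; norm_num at h
        · intro h; omega
    rw [heq, Finset.card_filter]
    rw [Fin.sum_univ_eq_sum_range (fun i => if 2*i+1 ≤ N then 1 else 0) N]
    rw [← Finset.card_filter]
    have : (Finset.range N).filter (fun i => 2*i+1 ≤ N) = Finset.range ((N+1)/2) := by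
      ext k
      simp only [Finset.mem_filter, Finset.mem_range]
      omega
    rw [this, Finset.card_range]
  have hcount2 : (Finset.univ.filter fun i : Fin N => sg0 i < 0).card = (N-1)/2 := by
    have heq : (Finset.univ.filter fun i : Fin N => sg0 i < 0)
        = (Finset.univ.filter fun i : Fin N => ¬ (2*i.val+1 ≤ N)) := by
      apply Finset.filter_congr
      intro i _
      simp only [hsg0]
      split_ifs with h1 h2
      · constructor
        · intro h; norm_num at h
        · intro h; omega
      · constructor
        · intro h; norm_num at h
        · intro h; omega
      · constructor
        · intro _; omega
        · intro _; norm_num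
    rw [heq, Finset.card_filter]
    rw [Fin.sum_univ_eq_sum_range (fun i => if ¬ (2*i+1 ≤ N) then 1 else 0) N]
    rw [← Finset.card_filter]
    have : (Finset.range N).filter (fun i => ¬ (2*i+1 ≤ N))
        = (Finset.range N) \ Finset.range ((N+1)/2) := by
      ext k
      simp only [Finset.mem_filter, Finset.mem_range, Finset.mem_sdiff]
      omega
    rw [this, Finset.card_sdiff_of_subset (by
      apply Finset.range_subset_range.mpr
      omega)]
    rw [Finset.card_range, Finset.card_range]
    omega
  -- nondegeneracy
  refine ⟨?_, e0, sg0, hli, hspan, horth, hnorm, hcount1, hcount2⟩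
  intro a ha hall
  obtain ⟨la, hla⟩ := (Submodule.mem_span_range_iff_exists_fun ℂ).1 ha
  have hz : ∀ i : Fin N, la i = 0 := by
    intro i
    have hb : MM (N-1-i.val) ∈ Submodule.span ℂ (Set.range (fun i : Fin N => MM i.val)) :=
      Submodule.subset_span ⟨⟨N-1-i.val, by omega⟩, rfl⟩
    have h0 := hall _ hb
    rw [← hla, hBsum] at h0
    simp only [hB2] at h0
    rw [Finset.sum_eq_single i] at h0
    · have hfold : B (MM i.val) (MM (N-1-i.val)) = al i.val := rfl
      rw [hfold] at h0
      exact (mul_eq_zero.mp h0).resolve_right (haln i.val i.isLt)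
    · intro b _ hbne
      rw [hG0 b.val (N-1-i.val) b.isLt (by omega)
        (by have : b.val ≠ i.val := fun h => hbne (Fin.ext h); omega), mul_zero]
    · intro habs
      exact absurd (Finset.mem_univ i) habs
  rw [← hla]
  apply Finset.sum_eq_zero
  intro i _
  rw [hz, zero_smul]

/-- `I` is compatible with the `*`-structure, the form `h(a,b) = I(a·b*)` is Hermitian,
and its restriction to `M = span{η₊^n η₋^m}` is a nondegenerate pseudo-Euclidean form
of signature `((p²+1)/2, (p²−1)/2)`. -/
theorem statement4 (p : ℕ) (hp : Odd p) (hp3 : 3 ≤ p)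
    (I : A p →ₗ[ℂ] ℂ)
    (hI : ∀ n m k : ℕ, n < p → m < p → k < p →
      I (ηp p ^ n * ηm p ^ m * dl p ^ k) =
        if n = p - 1 ∧ m = p - 1 ∧ k = 0 then (q p)⁻¹ else 0)
    (st : A p → A p)
    (hstAdd : ∀ x y : A p, st (x + y) = st x + st y)
    (hstSmul : ∀ (c : ℂ) (x : A p), st (c • x) = (starRingEnd ℂ) c • st x)
    (hstMul : ∀ x y : A p, st (x * y) = st y * st x)
    (hstInv : ∀ x : A p, st (st x) = x)
    (hst1 : st (ηp p) = ηp p) (hst2 : st (ηm p) = ηm p) (hst3 : st (dl p) = dl p) :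
    -- I(a*) = conj(I(a))
    (∀ a : A p, I (st a) = (starRingEnd ℂ) (I a)) ∧
    -- h(b,a) = conj(h(a,b)) for h(a,b) := I(a·b*)
    (∀ a b : A p, I (b * st a) = (starRingEnd ℂ) (I (a * st b))) ∧
    -- nondegeneracy of h on M
    (∀ a ∈ Submodule.span ℂ
        {x : A p | ∃ n m : ℕ, n < p ∧ m < p ∧ x = ηp p ^ n * ηm p ^ m},
      (∀ b ∈ Submodule.span ℂ
          {x : A p | ∃ n m : ℕ, n < p ∧ m < p ∧ x = ηp p ^ n * ηm p ^ m},
        I (a * st b) = 0) → a = 0) ∧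
    -- an h-orthogonal basis of M with (p²+1)/2 positive and (p²−1)/2 negative h-norms
    (∃ (e : Fin (p ^ 2) → A p) (sg : Fin (p ^ 2) → ℝ),
      LinearIndependent ℂ e ∧
      Submodule.span ℂ (Set.range e) =
        Submodule.span ℂ
          {x : A p | ∃ n m : ℕ, n < p ∧ m < p ∧ x = ηp p ^ n * ηm p ^ m} ∧
      (∀ i j : Fin (p ^ 2), i ≠ j → I (e i * st (e j)) = 0) ∧
      (∀ i : Fin (p ^ 2), I (e i * st (e i)) = (sg i : ℂ)) ∧
      (Finset.univ.filter fun i : Fin (p ^ 2) => 0 < sg i).card = (p ^ 2 + 1) / 2 ∧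
      (Finset.univ.filter fun i : Fin (p ^ 2) => sg i < 0).card = (p ^ 2 - 1) / 2) := by

  classical
  have hp0 : 0 < p := by omega
  have hc0 : q p ≠ 0 := q_ne_zero p
  have hcp : q p ^ p = 1 := q_pow_p p hp0
  have hIM := I_mono p hp0 I hI
  have hcdvd : ∀ a : ℕ, p ∣ a → q p ^ a = 1 := by
    rintro a ⟨u, rfl⟩
    rw [pow_mul, hcp, one_pow]
  have hst0 : st 0 = 0 := by
    have h := hstSmul 0 0
    simpa using h
  have hst1' : st 1 = 1 := by
    have h := hstMul (st 1) 1
    rw [mul_one, hstInv, mul_one] at h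
    exact h.symm
  have hstpow : ∀ (x : A p) (n : ℕ), st (x ^ n) = (st x) ^ n := by
    intro x n
    induction n with
    | zero => simpa using hst1'
    | succ k ih =>
      rw [pow_succ, hstMul, ih]
      exact (pow_succ' (st x) k).symm
  have hstM : ∀ n m k : ℕ, st (ηp p ^ n * ηm p ^ m * dl p ^ k)
      = (q p ^ (2*(m*n)) * (q p ^ (2*(m*k)) * q p ^ (2*(n*k)))⁻¹)
        • (ηp p ^ n * ηm p ^ m * dl p ^ k) := by
    intro n m k
    rw [hstMul, hstMul, hstpow, hstpow, hstpow, hst1, hst2, hst3, Lme,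
      mul_smul_comm, ← mul_assoc (dl p ^ k) (ηp p ^ n) (ηm p ^ m), Mform', smul_smul]
  have part1 : ∀ a : A p, I (st a) = (starRingEnd ℂ) (I a) := by
    have hmono : ∀ n m k : ℕ, I (st (ηp p ^ n * ηm p ^ m * dl p ^ k))
        = (starRingEnd ℂ) (I (ηp p ^ n * ηm p ^ m * dl p ^ k)) := by
      intro n m k
      rw [hstM, map_smul, smul_eq_mul, hIM n m k]
      by_cases hcnd : n = p - 1 ∧ m = p - 1 ∧ k % p = 0
      · obtain ⟨hn, hm, hk⟩ := hcnd
        rw [if_pos ⟨hn, hm, hk⟩, map_inv₀, q_conj, inv_inv]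
        have e1 : q p ^ (2*(m*k)) = 1 := hcdvd _ (by
          obtain ⟨u, rfl⟩ := Nat.dvd_of_mod_eq_zero hk
          exact ⟨2*m*u, by ring⟩)
        have e2 : q p ^ (2*(n*k)) = 1 := hcdvd _ (by
          obtain ⟨u, rfl⟩ := Nat.dvd_of_mod_eq_zero hk
          exact ⟨2*n*u, by ring⟩)
        have e3 : q p ^ (2*(m*n)) = q p ^ 2 := by
          rw [hm, hn, show (p-1)*(p-1) = (p-1)*(p-1) from rfl]
          rw [nat_sq_lemma1 p hp3, pow_add, hcdvd (p*(2*p-4)) ⟨2*p-4, rfl⟩, mul_one]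
        rw [e1, e2, e3, one_mul, inv_one, mul_one, pow_two, mul_assoc,
          mul_inv_cancel₀ hc0, mul_one]
      · rw [if_neg hcnd, map_zero, mul_zero]
    intro a
    have hmem : a ∈ Submodule.span ℂ
        {x : A p | ∃ n m k : ℕ, x = ηp p ^ n * ηm p ^ m * dl p ^ k} := by
      rw [span_mono_top]; trivial
    refine Submodule.span_induction
      (p := fun x _ => I (st x) = (starRingEnd ℂ) (I x)) ?_ ?_ ?_ ?_ hmem
    · rintro x ⟨n, m, k, rfl⟩
      exact hmono n m k
    · show I (st 0) = (starRingEnd ℂ) (I 0)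
      rw [hst0, map_zero, map_zero]
    · intro x y _ _ hx hy
      show I (st (x + y)) = (starRingEnd ℂ) (I (x + y))
      rw [hstAdd, map_add, map_add, map_add, hx, hy]
    · intro r x _ hx
      show I (st (r • x)) = (starRingEnd ℂ) (I (r • x))
      rw [hstSmul, map_smul, map_smul, smul_eq_mul, smul_eq_mul, map_mul, hx]
  have part2 : ∀ a b : A p, I (b * st a) = (starRingEnd ℂ) (I (a * st b)) := by
    intro a b
    have h := part1 (a * st b)
    rw [hstMul, hstInv] at h
    exact h
  have hGram : ∀ n m n' m' : ℕ,
      I ((ηp p ^ n * ηm p ^ m) * st (ηp p ^ n' * ηm p ^ m')) =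
        q p ^ (2*(m'*n')) * (q p ^ (2*(m*n'))
          * (if n+n' = p - 1 ∧ m+m' = p - 1 then (q p)⁻¹ else 0)) := by
    intro n m n' m'
    have h1 : st (ηp p ^ n' * ηm p ^ m')
        = q p ^ (2*(m'*n')) • (ηp p ^ n' * ηm p ^ m') := by
      rw [hstMul, hstpow, hstpow, hst1, hst2, Lme]
    have h2 : (ηp p ^ n * ηm p ^ m) * (ηp p ^ n' * ηm p ^ m')
        = q p ^ (2*(m*n')) • (ηp p ^ (n+n') * ηm p ^ (m+m')) := by
      calc (ηp p ^ n * ηm p ^ m) * (ηp p ^ n' * ηm p ^ m')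
          = ηp p ^ n * ((ηm p ^ m * ηp p ^ n') * ηm p ^ m') := by
            simp only [mul_assoc]
        _ = ηp p ^ n * ((q p ^ (2*(m*n')) • (ηp p ^ n' * ηm p ^ m)) * ηm p ^ m') := by
            rw [Lme]
        _ = q p ^ (2*(m*n')) • (ηp p ^ n * (ηp p ^ n' * (ηm p ^ m * ηm p ^ m'))) := by
            rw [smul_mul_assoc, mul_smul_comm]
            simp only [mul_assoc]
        _ = q p ^ (2*(m*n')) • (ηp p ^ (n+n') * ηm p ^ (m+m')) := by
            rw [← mul_assoc (ηp p ^ n) (ηp p ^ n') (ηm p ^ m * ηm p ^ m'),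
              ← pow_add, ← pow_add]
    have h3 : I (ηp p ^ (n+n') * ηm p ^ (m+m'))
        = if n+n' = p-1 ∧ m+m' = p-1 then (q p)⁻¹ else 0 := by
      have h := hIM (n+n') (m+m') 0
      rw [pow_zero, mul_one] at h
      simpa using h
    rw [h1, mul_smul_comm, map_smul, smul_eq_mul, h2, map_smul, smul_eq_mul, h3]
  -- index-level setup
  have hN2 : p^2 = p*p := by ring
  have hpp9 : 9 ≤ p*p := Nat.mul_le_mul hp3 hp3
  obtain ⟨t, ht⟩ := hp
  obtain ⟨hdvm, hmdm, hfixm, hoddm⟩ := mid_lemma p t ht hp3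
  have hodd : 2*((p^2-1)/2)+1 = p^2 := by rw [hN2]; exact hoddm
  set MMn : ℕ → A p := fun i => ηp p ^ (i / p) * ηm p ^ (i % p) with hMMn
  set Bf : A p → A p → ℂ := fun a b => I (a * st b) with hBf
  have hB1 : ∀ x y z : A p, Bf (x+y) z = Bf x z + Bf y z := by
    intro x y z; simp only [hBf]; rw [add_mul, map_add]
  have hB2 : ∀ (r : ℂ) (x z : A p), Bf (r • x) z = r * Bf x z := by
    intro r x z; simp only [hBf]; rw [smul_mul_assoc, map_smul, smul_eq_mul]
  have hB3 : ∀ x y z : A p, Bf x (y+z) = Bf x y + Bf x z := by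
    intro x y z; simp only [hBf]; rw [hstAdd, mul_add, map_add]
  have hB4 : ∀ (r : ℂ) (x z : A p), Bf x (r • z) = (starRingEnd ℂ) r * Bf x z := by
    intro r x z; simp only [hBf]; rw [hstSmul, mul_smul_comm, map_smul, smul_eq_mul]
  have hBsym : ∀ x y : A p, Bf y x = (starRingEnd ℂ) (Bf x y) := by
    intro x y; simp only [hBf]; exact part2 x y
  have hG0 : ∀ i j : ℕ, i < p^2 → j < p^2 → i + j ≠ p^2-1 → Bf (MMn i) (MMn j) = 0 := by
    intro i j hi hj hij
    simp only [hBf, hMMn]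
    rw [hGram, if_neg, mul_zero, mul_zero]
    rintro ⟨h1, h2⟩
    apply hij
    have di := Nat.div_add_mod i p
    have dj := Nat.div_add_mod j p
    have e1 : p*(i/p) + p*(j/p) = p*((i/p)+(j/p)) := by ring
    rw [h1] at e1
    have e2 : p*(p-1) + p = p*p := by
      rw [← Nat.mul_succ]; congr 1; omega
    omega
  have hGU : ∀ i : ℕ, i < p^2 →
      Bf (MMn i) (MMn (p^2-1-i)) * (starRingEnd ℂ) (Bf (MMn i) (MMn (p^2-1-i))) = 1 := by
    intro i hi
    have hi' : i < p*p := by omega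
    have hdm := idx_decomp p i hp0 hi'
    have ha : i / p < p := by rw [Nat.div_lt_iff_lt_mul hp0]; exact hi'
    have hb : i % p < p := Nat.mod_lt _ hp0
    simp only [hBf, hMMn]
    rw [show p^2-1-i = p*p-1-i from by omega, hdm.1, hdm.2, hGram,
      if_pos ⟨by omega, by omega⟩]
    rw [map_mul, map_mul, map_pow, map_pow, map_inv₀, q_conj, inv_inv, inv_pow, inv_pow]
    field_simp
  have hGmid : Bf (MMn ((p^2-1)/2)) (MMn ((p^2-1)/2)) = 1 := by
    simp only [hBf, hMMn]
    rw [show (p^2-1)/2 = (p*p-1)/2 from by omega, hdvm, hmdm, hGram,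
      if_pos ⟨by omega, by omega⟩]
    rw [← mul_assoc, ← pow_add]
    rw [show 2*(t*t) + 2*(t*t) = p*(p-2)+1 from by
      have h := mid_exp p t ht hp3
      calc 2*(t*t)+2*(t*t) = 2*(t*(t+t)) := by ring
        _ = p*(p-2)+1 := h]
    rw [pow_add, pow_mul, hcp, one_pow, one_mul, pow_one, mul_inv_cancel₀ hc0]
  obtain ⟨hnondeg, e, sg, hli, hspan, horth, hnorm, hc1, hc2⟩ :=
    ortho_construct (p^2) (by omega) hodd MMn Bf hB1 hB2 hB3 hB4 hBsym hG0 hGU hGmid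
  have hsets : {x : A p | ∃ n m : ℕ, n < p ∧ m < p ∧ x = ηp p ^ n * ηm p ^ m}
      = Set.range (fun i : Fin (p^2) => MMn i.val) := by
    ext x
    constructor
    · rintro ⟨n, m, hn, hm, rfl⟩
      refine ⟨⟨p*n+m, ?_⟩, ?_⟩
      · have h1 : p*(n+1) ≤ p*p := Nat.mul_le_mul_left p hn
        have h2 : p*(n+1) = p*n+p := by ring
        omega
      · simp only [hMMn]
        rw [Nat.mul_add_div hp0, Nat.mul_add_mod, Nat.div_eq_of_lt hm,
          Nat.mod_eq_of_lt hm, Nat.add_zero]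
    · rintro ⟨i, rfl⟩
      have hi : i.val < p*p := by have := i.isLt; omega
      exact ⟨i.val/p, i.val%p, by rwa [Nat.div_lt_iff_lt_mul hp0], Nat.mod_lt _ hp0, rfl⟩
  refine ⟨part1, part2, ?_, ?_⟩
  · intro a ha hall
    apply hnondeg a
    · rwa [hsets] at ha
    · intro b hb
      rw [← hsets] at hb
      have := hall b hb
      simpa only [hBf] using this
  · refine ⟨e, sg, hli, ?_, fun i j hij => ?_, fun i => ?_, hc1, hc2⟩
    · rw [hspan, hsets]
    · have := horth i j hij
      simpa only [hBf] using this
    · have := hnorm i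
      simpa only [hBf] using this
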